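/- arXiv:2504.11040 — 3 statements merged into one kernel-verified Lean document; each statement's English description precedes it below -/
import Mathlib

section
/- Let B be a closed, path-connected subset of [0,1]² disjoint from the diagonal. Define X₀ = {x : ℤ → [0,1] : (x_{2k}, x_{2k+1}) ∈ B for all k ∈ ℤ} and X₁ = {x : ℤ → [0,1] : (x_{2k-1}, x_{2k}) ∈ B for all k ∈ ℤ}. Then X₀ ∩ X₁ = ∅. -/
open unitInterval

lemma aux_escape (a : ℤ → ℝ) (ε : ℝ) (hε : 0 < ε) (hlo : ∀ n, 0 ≤ a n)
    (hhi : ∀ n, a n ≤ 1) (hstep : ∀ n : ℤ, a n + ε ≤ a (n + 1)) : False := by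
  have key : ∀ n : ℕ, a 0 + n * ε ≤ a n := by
    intro n
    induction n with
    | zero => simp
    | succ k ih =>
      have h := hstep k
      have : a 0 + (k + 1 : ℕ) * ε = (a 0 + k * ε) + ε := by push_cast; ring
      rw [this]
      have : ((k : ℤ) + 1 : ℤ) = ((k + 1 : ℕ) : ℤ) := by push_cast; ring
      rw [this] at h
      linarith
  obtain ⟨n, hn⟩ := exists_nat_gt (1 / ε)
  have hn' : 1 < (n : ℝ) * ε := by
    rw [div_lt_iff₀ hε] at hn; linarith
  have := key n
  have := hlo 0
  have := hhi n
  linarith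

/-- For a closed path-connected `B ⊆ [0,1]²` disjoint from the diagonal, the even-aligned
and odd-aligned block-type sets `X₀` and `X₁` are disjoint. -/
theorem stmt3 (B : Set (I × I)) (hcl : IsClosed B) (hpc : IsPathConnected B)
    (hdiag : ∀ p ∈ B, p.1 ≠ p.2) :
    {x : ℤ → I | ∀ k : ℤ, (x (2 * k), x (2 * k + 1)) ∈ B} ∩
      {x : ℤ → I | ∀ k : ℤ, (x (2 * k - 1), x (2 * k)) ∈ B} = ∅ := by
  rw [Set.eq_empty_iff_forall_notMem]
  rintro x ⟨h0, h1⟩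
  -- all consecutive pairs in B
  have hB : ∀ n : ℤ, (x n, x (n + 1)) ∈ B := by
    intro n
    rcases Int.even_or_odd n with ⟨k, hk⟩ | ⟨k, hk⟩
    · have := h0 k
      have e : 2 * k = n := by omega
      rw [e] at this; exact this
    · have := h1 (k + 1)
      have e1 : 2 * (k + 1) - 1 = n := by omega
      have e2 : 2 * (k + 1) = n + 1 := by omega
      rw [e1, e2] at this; exact this
  set g : I × I → ℝ := fun p => (p.2 : ℝ) - (p.1 : ℝ) with hg_def
  have hg : Continuous g :=
    (continuous_subtype_val.comp continuous_snd).sub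
      (continuous_subtype_val.comp continuous_fst)
  have hconn : IsConnected (g '' B) := hpc.isConnected.image g hg.continuousOn
  have hne0 : (0 : ℝ) ∉ g '' B := by
    rintro ⟨p, hp, hgp⟩
    exact hdiag p hp (Subtype.ext (by simp only [hg_def] at hgp; linarith))
  have hord : (g '' B).OrdConnected := hconn.isPreconnected.ordConnected
  have hBcomp : IsCompact B := hcl.isCompact
  obtain ⟨b0, hb0, -⟩ := hpc
  have hBne : B.Nonempty := ⟨b0, hb0⟩
  -- dichotomy
  have hsign : (∀ p ∈ B, 0 < g p) ∨ (∀ p ∈ B, g p < 0) := by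
    by_cases hc : ∀ p ∈ B, 0 < g p
    · exact Or.inl hc
    · push_neg at hc
      obtain ⟨q, hq, hq0⟩ := hc
      have hqneg : g q < 0 :=
        lt_of_le_of_ne hq0 (fun h => hne0 ⟨q, hq, h⟩)
      right
      intro p hp
      by_contra hple
      push_neg at hple
      have hppos : 0 < g p :=
        lt_of_le_of_ne hple (fun h => hne0 ⟨p, hp, h.symm⟩)
      have : (0 : ℝ) ∈ g '' B :=
        hord.out ⟨q, hq, rfl⟩ ⟨p, hp, rfl⟩ ⟨le_of_lt hqneg, le_of_lt hppos⟩
      exact hne0 this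
  rcases hsign with hpos | hneg
  · -- min of g on B is positive ε; x strictly increases by ε
    obtain ⟨p0, hp0, hmin⟩ := hBcomp.exists_isMinOn hBne hg.continuousOn
    have hε : 0 < g p0 := hpos p0 hp0
    apply aux_escape (fun n => (x n : ℝ)) (g p0) hε
      (fun n => (x n).2.1) (fun n => (x n).2.2)
    intro n
    have := hmin (hB n)
    simp only [hg_def, Set.mem_setOf_eq] at this ⊢
    linarith
  · -- max of g on B is negative; x decreases, reverse the sequence
    obtain ⟨p0, hp0, hmax⟩ := hBcomp.exists_isMaxOn hBne hg.continuousOn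
    have hε : 0 < -g p0 := by linarith [hneg p0 hp0]
    apply aux_escape (fun n => (x (-n) : ℝ)) (-g p0) hε
      (fun n => (x (-n)).2.1) (fun n => (x (-n)).2.2)
    intro n
    have := hmax (hB (-n - 1))
    have e : -n - 1 + 1 = -(n + 1) + 1 + 1 - 1 := by ring
    simp only [hg_def, Set.mem_setOf_eq] at this ⊢
    have e2 : (-n - 1 + 1 : ℤ) = -n := by ring
    rw [e2] at this
    have e3 : (-(n + 1) : ℤ) = -n - 1 := by ring
    rw [e3]
    linarith
end

section
/- Let B ⊆ [0,1]² be closed, path-connected, and disjoint from the diagonal, and let X = X₀ ∪ X₁ where X₀ = {x ∈ [0,1]^ℤ : (x_{2k},x_{2k+1}) ∈ B ∀k} and X₁ = {x ∈ [0,1]^ℤ : (x_{2k-1},x_{2k}) ∈ B ∀k}. Define φ : X → {0,1} by φ(x) = 0 if x ∈ X₀ and φ(x) = 1 if x ∈ X₁, and T : {0,1} → {0,1} by T(i) = 1 - i. Then φ is well-defined, continuous (with {0,1} discrete), and φ ∘ σ = T ∘ φ, where σ is the shift on [0,1]^ℤ. -/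
open unitInterval

/-- The even-aligned block-type set. -/
def X0 (B : Set (I × I)) : Set (ℤ → I) :=
  {x | ∀ k : ℤ, (x (2 * k), x (2 * k + 1)) ∈ B}

/-- The odd-aligned block-type set. -/
def X1 (B : Set (I × I)) : Set (ℤ → I) :=
  {x | ∀ k : ℤ, (x (2 * k - 1), x (2 * k)) ∈ B}

lemma helper_seq (ε : ℝ) (hε : 0 < ε) (x : ℤ → I)
    (h : ∀ n : ℤ, (x n : ℝ) + ε ≤ x (n + 1)) : False := by
  have key : ∀ N : ℕ, (x 0 : ℝ) + N * ε ≤ x (N : ℤ) := by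
    intro N
    induction N with
    | zero => simp
    | succ n ih =>
      have h2 := h (n : ℤ)
      have e : ((n + 1 : ℕ) : ℤ) = (n : ℤ) + 1 := by push_cast; ring
      rw [e]
      have expand : (((n + 1 : ℕ)) : ℝ) * ε = (n : ℝ) * ε + ε := by push_cast; ring
      rw [expand]
      linarith
  obtain ⟨N, hN⟩ := exists_nat_gt (1 / ε)
  have hk := key N
  have h0 : (0 : ℝ) ≤ x 0 := (x 0).2.1
  have h1 : (x (N : ℤ) : ℝ) ≤ 1 := (x (N : ℤ)).2.2
  have : (1 : ℝ) < N * ε := by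
    rw [div_lt_iff₀ hε] at hN; linarith
  linarith

lemma isClosed_X0 (B : Set (I × I)) (hcl : IsClosed B) : IsClosed (X0 B) := by
  have : X0 B = ⋂ k : ℤ, (fun x : ℤ → I => (x (2 * k), x (2 * k + 1))) ⁻¹' B := by
    ext x; simp [X0]
  rw [this]
  exact isClosed_iInter fun k =>
    hcl.preimage ((continuous_apply (2 * k)).prodMk (continuous_apply (2 * k + 1)))

lemma isClosed_X1 (B : Set (I × I)) (hcl : IsClosed B) : IsClosed (X1 B) := by
  have : X1 B = ⋂ k : ℤ, (fun x : ℤ → I => (x (2 * k - 1), x (2 * k))) ⁻¹' B := by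
    ext x; simp [X1]
  rw [this]
  exact isClosed_iInter fun k =>
    hcl.preimage ((continuous_apply (2 * k - 1)).prodMk (continuous_apply (2 * k)))

lemma X0_disjoint_X1 (B : Set (I × I)) (hcl : IsClosed B) (hpc : IsPathConnected B)
    (hdiag : ∀ p ∈ B, p.1 ≠ p.2) (x : ℤ → I) (h0 : x ∈ X0 B) (h1 : x ∈ X1 B) : False := by
  have hcons : ∀ n : ℤ, (x n, x (n + 1)) ∈ B := by
    intro n
    rcases Int.even_or_odd n with ⟨k, hk⟩ | ⟨k, hk⟩
    · have h := h0 k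
      have e1 : 2 * k = n := by omega
      rw [e1] at h; exact h
    · have h := h1 (k + 1)
      have e1 : 2 * (k + 1) - 1 = n := by omega
      have e2 : 2 * (k + 1) = n + 1 := by omega
      rw [e1, e2] at h; exact h
  have hg : Continuous fun p : I × I => (p.2 : ℝ) - (p.1 : ℝ) :=
    (continuous_subtype_val.comp continuous_snd).sub
      (continuous_subtype_val.comp continuous_fst)
  have hcomp : IsCompact B := hcl.isCompact
  have hBne : B.Nonempty := by obtain ⟨b, hbB, -⟩ := hpc; exact ⟨b, hbB⟩
  by_cases hpos : ∀ p ∈ B, (p.1 : ℝ) < (p.2 : ℝ)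
  · obtain ⟨p₀, hp₀B, hmin⟩ := hcomp.exists_isMinOn hBne hg.continuousOn
    have hε : 0 < (p₀.2 : ℝ) - p₀.1 := sub_pos.2 (hpos p₀ hp₀B)
    refine helper_seq _ hε x fun n => ?_
    have := isMinOn_iff.mp hmin _ (hcons n)
    simp only at this
    linarith
  · have hneg : ∀ p ∈ B, (p.2 : ℝ) < (p.1 : ℝ) := by
      push_neg at hpos
      obtain ⟨q, hqB, hq⟩ := hpos
      have hq' : (q.2 : ℝ) < q.1 :=
        lt_of_le_of_ne hq (fun h => hdiag q hqB (Subtype.ext h.symm))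
      intro p hpB
      by_contra hle
      push_neg at hle
      have hp' : (p.1 : ℝ) < p.2 :=
        lt_of_le_of_ne hle (fun h => hdiag p hpB (Subtype.ext h))
      obtain ⟨γ, hγ⟩ := hpc.joinedIn p hpB q hqB
      have hfc : Continuous fun t => ((γ t).2 : ℝ) - ((γ t).1 : ℝ) := hg.comp γ.continuous
      have h0' : (0:ℝ) ∈ Set.Icc (((γ 1).2 : ℝ) - ((γ 1).1 : ℝ)) (((γ 0).2 : ℝ) - ((γ 0).1 : ℝ)) := by
        rw [Set.mem_Icc, γ.source, γ.target]
        constructor <;> linarith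
      obtain ⟨t, ht⟩ := intermediate_value_univ (1 : I) (0 : I) hfc h0'
      have ht' : ((γ t).2 : ℝ) - ((γ t).1 : ℝ) = 0 := ht
      have heq : ((γ t).1 : ℝ) = ((γ t).2 : ℝ) := by linarith
      exact hdiag (γ t) (hγ t) (Subtype.ext heq)
    have hg' : Continuous fun p : I × I => (p.1 : ℝ) - (p.2 : ℝ) :=
      (continuous_subtype_val.comp continuous_fst).sub
        (continuous_subtype_val.comp continuous_snd)
    obtain ⟨p₀, hp₀B, hmin⟩ := hcomp.exists_isMinOn hBne hg'.continuousOn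
    have hε : 0 < (p₀.1 : ℝ) - p₀.2 := sub_pos.2 (hneg p₀ hp₀B)
    refine helper_seq _ hε (fun n => x (-n)) fun n => ?_
    show (x (-n) : ℝ) + _ ≤ (x (-(n + 1)) : ℝ)
    have := isMinOn_iff.mp hmin _ (hcons (-n - 1))
    simp only at this
    have e2 : -n - 1 + 1 = -n := by ring
    rw [e2] at this
    have e3 : -(n + 1) = -n - 1 := by ring
    rw [e3]
    linarith

lemma shift_mem_X1 (B : Set (I × I)) (x : ℤ → I) (h : x ∈ X0 B) :
    (fun n => x (n + 1)) ∈ X1 B := by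
  intro k
  show (x (2 * k - 1 + 1), x (2 * k + 1)) ∈ B
  have e : 2 * k - 1 + 1 = 2 * k := by ring
  rw [e]; exact h k

lemma shift_mem_X0 (B : Set (I × I)) (x : ℤ → I) (h : x ∈ X1 B) :
    (fun n => x (n + 1)) ∈ X0 B := by
  intro k
  show (x (2 * k + 1), x (2 * k + 1 + 1)) ∈ B
  have e1 : 2 * (k + 1) - 1 = 2 * k + 1 := by ring
  have e2 : 2 * (k + 1) = 2 * k + 1 + 1 := by ring
  have := h (k + 1)
  rw [e1, e2] at this; exact this


/-- For closed path-connected `B` disjoint from the diagonal, the map `φ : X₀ ∪ X₁ → {0,1}`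
sending `X₀` to `0` and `X₁` to `1` is well-defined, continuous, and intertwines the shift with
the two-point swap `i ↦ 1 - i`. -/
theorem stmt11 (B : Set (I × I)) (hcl : IsClosed B) (hpc : IsPathConnected B)
    (hdiag : ∀ p ∈ B, p.1 ≠ p.2) :
    ∃ φ : {x : ℤ → I // x ∈ X0 B ∪ X1 B} → Fin 2,
      Continuous φ ∧
      (∀ x : {x : ℤ → I // x ∈ X0 B ∪ X1 B}, x.1 ∈ X0 B → φ x = 0) ∧
      (∀ x : {x : ℤ → I // x ∈ X0 B ∪ X1 B}, x.1 ∈ X1 B → φ x = 1) ∧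
      (∀ (x : {x : ℤ → I // x ∈ X0 B ∪ X1 B})
        (h : (fun n : ℤ => x.1 (n + 1)) ∈ X0 B ∪ X1 B),
        φ ⟨fun n : ℤ => x.1 (n + 1), h⟩ = 1 - φ x) := by
  classical
  have hdisj := X0_disjoint_X1 B hcl hpc hdiag
  set S : Set {x : ℤ → I // x ∈ X0 B ∪ X1 B} := {x | x.1 ∈ X0 B} with hSdef
  refine ⟨fun x => if x.1 ∈ X0 B then 0 else 1, ?_, ?_, ?_, ?_⟩
  · -- continuity
    have hS : IsClosed S := (isClosed_X0 B hcl).preimage continuous_subtype_val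
    have hScEq : Sᶜ = {x : {x : ℤ → I // x ∈ X0 B ∪ X1 B} | x.1 ∈ X1 B} := by
      ext x
      simp only [hSdef, Set.mem_compl_iff, Set.mem_setOf_eq]
      constructor
      · intro h
        rcases x.2 with h0 | h1
        · exact absurd h0 h
        · exact h1
      · intro h1 h0
        exact hdisj x.1 h0 h1
    have hScClosed : IsClosed Sᶜ := by
      rw [hScEq]
      exact (isClosed_X1 B hcl).preimage continuous_subtype_val
    have hSOpen : IsOpen S := isClosed_compl_iff.mp hScClosed
    have hScOpen : IsOpen Sᶜ := hS.isOpen_compl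
    apply IsLocallyConstant.continuous
    intro s
    by_cases h0s : (0 : Fin 2) ∈ s <;> by_cases h1s : (1 : Fin 2) ∈ s
    · have : (fun x : {x : ℤ → I // x ∈ X0 B ∪ X1 B} =>
          if x.1 ∈ X0 B then (0 : Fin 2) else 1) ⁻¹' s = Set.univ := by
        ext x; simp only [Set.mem_preimage, Set.mem_univ, iff_true]
        split_ifs <;> assumption
      rw [this]; exact isOpen_univ
    · have : (fun x : {x : ℤ → I // x ∈ X0 B ∪ X1 B} =>
          if x.1 ∈ X0 B then (0 : Fin 2) else 1) ⁻¹' s = S := by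
        ext x; simp only [Set.mem_preimage, hSdef, Set.mem_setOf_eq]
        split_ifs with h <;> simp [h, h0s, h1s]
      rw [this]; exact hSOpen
    · have : (fun x : {x : ℤ → I // x ∈ X0 B ∪ X1 B} =>
          if x.1 ∈ X0 B then (0 : Fin 2) else 1) ⁻¹' s = Sᶜ := by
        ext x; simp only [Set.mem_preimage, hSdef, Set.mem_compl_iff, Set.mem_setOf_eq]
        split_ifs with h <;> simp [h, h0s, h1s]
      rw [this]; exact hScOpen
    · have : (fun x : {x : ℤ → I // x ∈ X0 B ∪ X1 B} =>
          if x.1 ∈ X0 B then (0 : Fin 2) else 1) ⁻¹' s = ∅ := by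
        ext x; simp only [Set.mem_preimage, Set.mem_empty_iff_false, iff_false]
        split_ifs <;> assumption
      rw [this]; exact isOpen_empty
  · intro x h0
    exact if_pos h0
  · intro x h1
    exact if_neg (fun h0 => hdisj x.1 h0 h1)
  · intro x h
    rcases x.2 with h0 | h1
    · have hs1 : (fun n : ℤ => x.1 (n + 1)) ∈ X1 B := shift_mem_X1 B x.1 h0
      simp only
      rw [if_neg (fun hh => hdisj _ hh hs1), if_pos h0]
      decide
    · have hs0 : (fun n : ℤ => x.1 (n + 1)) ∈ X0 B := shift_mem_X0 B x.1 h1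
      simp only
      rw [if_pos hs0, if_neg (fun hh => hdisj x.1 hh h1)]
      decide
end

section
/- Let B = {(s, s + 1/10 mod 1) : s ∈ ℝ/ℤ} ⊆ (ℝ/ℤ)². Then B is closed, path-connected, disjoint from the diagonal {(t,t) : t ∈ ℝ/ℤ}, and the point x : ℤ → ℝ/ℤ defined by x_i = i/10 mod 1 satisfies (x_k, x_{k+1}) ∈ B for all k ∈ ℤ; consequently x lies in both X₀ = {y ∈ (ℝ/ℤ)^ℤ : (y_{2k},y_{2k+1}) ∈ B ∀k} and X₁ = {y ∈ (ℝ/ℤ)^ℤ : (y_{2k-1},y_{2k}) ∈ B ∀k}, so X₀ ∩ X₁ ≠ ∅. -/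
open scoped Real

/-- The graph of rotation by `1/10` on the torus. -/
def torB : Set (AddCircle (1 : ℝ) × AddCircle (1 : ℝ)) :=
  {p | p.2 = p.1 + ((1 / 10 : ℝ) : AddCircle (1 : ℝ))}

lemma torB_mem (k : ℤ) :
    (((k / 10 : ℝ) : AddCircle (1 : ℝ)), (((k + 1) / 10 : ℝ) : AddCircle (1 : ℝ))) ∈ torB := by
  show (((k + 1) / 10 : ℝ) : AddCircle (1 : ℝ)) = _
  have h : ((k : ℝ) + 1) / 10 = k / 10 + 1 / 10 := by ring
  rw [h]
  push_cast
  rfl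

/-- On the torus `ℝ/ℤ`, the graph `B` of rotation by `1/10` is closed, path-connected,
disjoint from the diagonal, yet the orbit point `x_i = i/10 mod 1` has all consecutive
pairs in `B`, hence lies in both `X₀` and `X₁`, so `X₀ ∩ X₁ ≠ ∅`. -/
theorem stmt18 :
    IsClosed torB ∧ IsPathConnected torB ∧
    (∀ t : AddCircle (1 : ℝ), (t, t) ∉ torB) ∧
    (∀ k : ℤ, (((k / 10 : ℝ) : AddCircle (1 : ℝ)), (((k + 1) / 10 : ℝ) : AddCircle (1 : ℝ)))
      ∈ torB) ∧
    (fun i : ℤ => ((i / 10 : ℝ) : AddCircle (1 : ℝ))) ∈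
      {y : ℤ → AddCircle (1 : ℝ) | ∀ k : ℤ, (y (2 * k), y (2 * k + 1)) ∈ torB} ∩
        {y : ℤ → AddCircle (1 : ℝ) | ∀ k : ℤ, (y (2 * k - 1), y (2 * k)) ∈ torB} ∧
    ({y : ℤ → AddCircle (1 : ℝ) | ∀ k : ℤ, (y (2 * k), y (2 * k + 1)) ∈ torB} ∩
      {y : ℤ → AddCircle (1 : ℝ) | ∀ k : ℤ, (y (2 * k - 1), y (2 * k)) ∈ torB}).Nonempty := by
  have hclosed : IsClosed torB :=
    isClosed_eq continuous_snd (continuous_fst.add continuous_const)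
  have hrange : torB =
      (fun s : AddCircle (1 : ℝ) => (s, s + ((1 / 10 : ℝ) : AddCircle (1 : ℝ)))) '' Set.univ := by
    ext p
    constructor
    · intro hp
      exact ⟨p.1, trivial, Prod.ext rfl hp.symm⟩
    · rintro ⟨s, -, rfl⟩
      rfl
  have hpath : IsPathConnected torB := by
    rw [hrange]
    exact (IsPathConnected.image (isPathConnected_univ)
      (continuous_id.prodMk (continuous_id.add continuous_const)))
  have hc : ((1 / 10 : ℝ) : AddCircle (1 : ℝ)) ≠ 0 := by
    rw [Ne, AddCircle.coe_eq_zero_iff]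
    rintro ⟨n, hn⟩
    have : (n : ℝ) = 1 / 10 := by simpa using hn
    rcases (by omega : n ≤ -1 ∨ n = 0 ∨ 1 ≤ n) with h | h | h
    · have h' : (n : ℝ) ≤ -1 := by exact_mod_cast h
      linarith
    · subst h; norm_num at this
    · have h' : (1 : ℝ) ≤ (n : ℝ) := by exact_mod_cast h
      linarith
  have hdiag : ∀ t : AddCircle (1 : ℝ), (t, t) ∉ torB := by
    intro t ht
    exact hc (by simpa using (left_eq_add.mp ht))
  have hmem : ∀ k : ℤ, (((k / 10 : ℝ) : AddCircle (1 : ℝ)),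
      (((k + 1) / 10 : ℝ) : AddCircle (1 : ℝ))) ∈ torB := torB_mem
  have hx : (fun i : ℤ => ((i / 10 : ℝ) : AddCircle (1 : ℝ))) ∈
      {y : ℤ → AddCircle (1 : ℝ) | ∀ k : ℤ, (y (2 * k), y (2 * k + 1)) ∈ torB} ∩
        {y : ℤ → AddCircle (1 : ℝ) | ∀ k : ℤ, (y (2 * k - 1), y (2 * k)) ∈ torB} := by
    constructor
    · intro k
      have := hmem (2 * k)
      simpa using this
    · intro k
      have := hmem (2 * k - 1)
      simpa using this
  exact ⟨hclosed, hpath, hdiag, hmem, hx, ⟨_, hx⟩⟩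
end
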